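/- Let k be a positive integer divisible by 4, let N = C(k, k/2), and let C_1, …, C_N enumerate the bit words of length k with exactly k/2 ones. Define α(0) = 1⋄, α(1) = ⋄1, β(0) = 1⋄, β(1) = 0⋄, and for a bit word C of length k let M_{α,C} = α(C[1])⋯α(C[k]) and M_{β,C} = β(C[1])⋯β(C[k]). For a ∈ {1,…,N} define W_{2a−1} = ⋄^{6k} 1^{k/4} ⋄^{11k/4} 1 1 M_{α,C_a} 1 ⋄^{11k/4+1} 1^{k/4−1} ⋄^{6k+1} and W_{2a} = 1^{9k+1} ⋄ M_{β,Rev(C_a)} ⋄ ⋄ 1^{9k}. Then for all a, b ∈ {1,…,N}, f(W_{2a−1}, Rev(W_{2b})) = 1 if a = b, and f(W_{2a−1}, Rev(W_{2b})) ≤ 0 if a ≠ b. -/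

import Mathlib

/-- The alphabet Σ = {0, 1, ⋄} of dipole letters. -/
inductive Dip : Type
  | zero : Dip
  | one : Dip
  | blank : Dip
  deriving DecidableEq

open Dip

/-- The force between a pair of letters: 1 if {x,y} = {0,1}, -1 if x = y ∈ {0,1}, 0 otherwise. -/
def lf : Dip → Dip → ℤ
  | zero, one => 1
  | one, zero => 1
  | zero, zero => -1
  | one, one => -1
  | _, _ => 0

/-- The force between a pair of equal-length words: the sum of letterwise forces. -/
def force (X Y : List Dip) : ℤ := (List.zipWith lf X Y).sum

/-- `n` repetitions of a letter. -/
def rep (n : ℕ) (x : Dip) : List Dip := List.replicate n x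

/-- `n` repetitions of a word. -/
def rep2 (n : ℕ) (p : List Dip) : List Dip := (List.replicate n p).flatten

/-- `α(0) = 1⋄`, `α(1) = ⋄1`. -/
def amap : Bool → List Dip
  | false => [one, blank]
  | true => [blank, one]

/-- `β(0) = 1⋄`, `β(1) = 0⋄`. -/
def bmap : Bool → List Dip
  | false => [one, blank]
  | true => [zero, blank]

/-- `M_{α,C} = α(C[1]) α(C[2]) ⋯ α(C[k])`. -/
def MA (C : List Bool) : List Dip := (C.map amap).flatten

/-- `M_{β,C} = β(C[1]) β(C[2]) ⋯ β(C[k])`. -/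
def MB (C : List Bool) : List Dip := (C.map bmap).flatten

/-- `W_{2a-1} = ⋄^{6k} 1^{k/4} ⋄^{11k/4} 1 1 M_{α,C_a} 1 ⋄^{11k/4+1} 1^{k/4-1} ⋄^{6k+1}`. -/
def WoddC (k : ℕ) (C : List Bool) : List Dip :=
  rep (6 * k) blank ++ rep (k / 4) one ++ rep (11 * k / 4) blank ++ [one, one] ++
    MA C ++ [one] ++ rep (11 * k / 4 + 1) blank ++ rep (k / 4 - 1) one ++
    rep (6 * k + 1) blank

/-- `W_{2a} = 1^{9k+1} ⋄ M_{β,Rev(C_a)} ⋄ ⋄ 1^{9k}`. -/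
def WevenC (k : ℕ) (C : List Bool) : List Dip :=
  rep (9 * k + 1) one ++ [blank] ++ MB C.reverse ++ [blank, blank] ++ rep (9 * k) one

-- auxiliary
def xb : Bool → Dip
  | false => one
  | true => zero

lemma lf_blank_left (y : Dip) : lf blank y = 0 := by cases y <;> rfl
lemma lf_blank_right (x : Dip) : lf x blank = 0 := by cases x <;> rfl

lemma force_append {X1 X2 Y1 Y2 : List Dip} (h : X1.length = Y1.length) :
    force (X1 ++ X2) (Y1 ++ Y2) = force X1 Y1 + force X2 Y2 := by
  unfold force
  rw [List.zipWith_append h, List.sum_append]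

lemma force_blank_left (n : ℕ) (Y : List Dip) : force (rep n blank) Y = 0 := by
  induction n generalizing Y with
  | zero => rfl
  | succ n ih =>
    cases Y with
    | nil => rfl
    | cons y Y =>
      have := ih Y
      simp only [force, rep, List.replicate_succ, List.zipWith_cons_cons, List.sum_cons] at *
      rw [lf_blank_left, this, add_zero]

lemma force_blank_right (n : ℕ) (X : List Dip) : force X (rep n blank) = 0 := by
  induction n generalizing X with
  | zero => cases X <;> rfl
  | succ n ih =>
    cases X with
    | nil => rfl
    | cons x X =>
      have := ih X
      simp only [force, rep, List.replicate_succ, List.zipWith_cons_cons, List.sum_cons] at *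
      rw [lf_blank_right, this, add_zero]

lemma force_one_one (n : ℕ) : force (rep n one) (rep n one) = -(n : ℤ) := by
  induction n with
  | zero => rfl
  | succ n ih =>
    simp only [force, rep, List.replicate_succ, List.zipWith_cons_cons, List.sum_cons] at *
    rw [ih]
    show (-1 : ℤ) + _ = _
    push_cast
    ring

lemma MA_length (A : List Bool) : (MA A).length = 2 * A.length := by
  induction A with
  | nil => rfl
  | cons a A ih =>
    cases a <;> simp [MA, amap] at * <;> omega

lemma MBp_length (B : List Bool) :
    ((B.map (fun b => [blank, xb b])).flatten).length = 2 * B.length := by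
  induction B with
  | nil => rfl
  | cons b B ih => simp at * ; omega

lemma rev_MB (B : List Bool) :
    (MB B.reverse).reverse = (B.map (fun b => [blank, xb b])).flatten := by
  induction B with
  | nil => rfl
  | cons b B ih =>
    simp only [List.reverse_cons, MB, List.map_append, List.flatten_append,
      List.reverse_append, List.map_cons, List.map_nil] at *
    rw [ih]
    cases b <;> rfl

lemma rev_even (k : ℕ) (B : List Bool) :
    (WevenC k B).reverse = rep (9 * k) one ++ ([blank, blank] ++
      ((B.map (fun b => [blank, xb b])).flatten ++ ([blank] ++ rep (9 * k + 1) one))) := by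
  unfold WevenC
  simp only [List.reverse_append, rev_MB, rep, List.reverse_replicate]
  simp [List.append_assoc]

lemma middle_force : ∀ (A B : List Bool), A.length = B.length →
    force (MA A) ((B.map (fun b => [blank, xb b])).flatten)
      = 2 * (((List.zipWith (· && ·) A B).count true : ℤ)) - (A.count true : ℤ)
  | [], [], _ => rfl
  | a :: A, b :: B, h => by
    have hlen : (amap a).length = ([blank, xb b] : List Dip).length := by cases a <;> rfl
    have ih := middle_force A B (by simpa using h)
    simp only [MA, List.map_cons, List.flatten_cons, List.zipWith_cons_cons]
    rw [show ((B.map (fun b => [blank, xb b])).flatten : List Dip) = (List.map (fun b => [blank, xb b]) B).flatten from rfl] at *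
    rw [force_append hlen]
    unfold MA at ih
    rw [ih]
    cases a <;> cases b <;>
      simp [List.count_cons, force, amap, xb, lf] <;> push_cast <;> ring

lemma zip_count_lemma : ∀ (A B : List Bool), A.length = B.length →
    (List.zipWith (· && ·) A B).count true ≤ A.count true ∧
    (List.zipWith (· && ·) A B).count true ≤ B.count true ∧
    (A.count true = B.count true →
      (List.zipWith (· && ·) A B).count true = A.count true → A = B)
  | [], [], _ => ⟨le_refl _, le_refl _, fun _ _ => rfl⟩
  | a :: A, b :: B, h => by
    obtain ⟨h1, h2, h3⟩ := zip_count_lemma A B (by simpa using h)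
    refine ⟨?_, ?_, ?_⟩
    · cases a <;> cases b <;> simp [List.count_cons] <;> omega
    · cases a <;> cases b <;> simp [List.count_cons] <;> omega
    · intro hc hz
      cases a <;> cases b <;> simp [List.count_cons] at hc hz ⊢
      · exact h3 (by omega) (by omega)
      · omega
      · omega
      · exact h3 (by omega) (by omega)

lemma force_formula (m : ℕ) (hm : 1 ≤ m) (A B : List Bool)
    (hA : A.length = 4 * m) (hB : B.length = 4 * m) :
    force (WoddC (4 * m) A) ((WevenC (4 * m) B).reverse)
      = 2 * (((List.zipWith (· && ·) A B).count true : ℤ)) - (A.count true : ℤ)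
          - 2 * (m : ℤ) + 1 := by
  rw [rev_even]
  unfold WoddC
  have e1 : 4 * m / 4 = m := by omega
  have e2 : 11 * (4 * m) / 4 = 11 * m := by omega
  have e3 : 9 * (4 * m) = 24 * m + (m + 11 * m) := by ring
  have e4 : 9 * (4 * m) + 1 = (11 * m + 1) + ((m - 1) + (24 * m + 1)) := by omega
  rw [e1, e2, e4, e3]
  rw [show rep (24 * m + (m + 11 * m)) one
        = rep (24 * m) one ++ (rep m one ++ rep (11 * m) one) by
      simp only [rep, List.replicate_add]]
  rw [show rep ((11 * m + 1) + ((m - 1) + (24 * m + 1))) one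
        = rep (11 * m + 1) one ++ (rep (m - 1) one ++ rep (24 * m + 1) one) by
      simp only [rep, List.replicate_add]]
  have lr : ∀ (n : ℕ) (x : Dip), (rep n x).length = n := by simp [rep]
  simp only [List.append_assoc]
  rw [force_append (by simp only [rep, List.length_replicate]; omega : (rep (6 * (4 * m)) blank).length = (rep (24 * m) one).length),
      force_append (by simp [lr]),
      force_append (by simp [lr]),
      force_append (by rfl : ([one, one] : List Dip).length = ([blank, blank] : List Dip).length),
      force_append (by rw [MA_length, MBp_length, hA, hB]),
      force_append (by rfl : ([one] : List Dip).length = ([blank] : List Dip).length),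
      force_append (by simp [lr]),
      force_append (by simp [lr])]
  rw [force_blank_left, force_blank_left, force_blank_left, force_blank_left,
      force_one_one, force_one_one, middle_force A B (by omega)]
  have : force [one, one] [blank, blank] = 0 := rfl
  rw [this]
  have : force [one] [blank] = 0 := rfl
  rw [this]
  have hcast : ((m - 1 : ℕ) : ℤ) = (m : ℤ) - 1 := by omega
  rw [hcast]
  ring


/-- Forces in the logarithmic-length construction: `f(W_{2a-1}, Rev(W_{2b})) = 1` if
`a = b` and is non-positive otherwise. -/
theorem stmt15 (k : ℕ) (hk : 0 < k) (h4 : 4 ∣ k) (N : ℕ)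
    (hN : N = Nat.choose k (k / 2)) (C : ℕ → List Bool)
    (hwords : ∀ a ∈ Finset.Icc 1 N, (C a).length = k ∧ (C a).count true = k / 2)
    (hinj : ∀ a ∈ Finset.Icc 1 N, ∀ b ∈ Finset.Icc 1 N, C a = C b → a = b) :
    ∀ a ∈ Finset.Icc 1 N, ∀ b ∈ Finset.Icc 1 N,
      (a = b → force (WoddC k (C a)) ((WevenC k (C b)).reverse) = 1) ∧
      (a ≠ b → force (WoddC k (C a)) ((WevenC k (C b)).reverse) ≤ 0) := by
  intro a ha b hb
  obtain ⟨m, rfl⟩ : ∃ m, k = 4 * m := h4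
  have hm : 1 ≤ m := by omega
  obtain ⟨hAl, hAc⟩ := hwords a ha
  obtain ⟨hBl, hBc⟩ := hwords b hb
  have hAc' : (C a).count true = 2 * m := by omega
  have hBc' : (C b).count true = 2 * m := by omega
  constructor
  · rintro rfl
    rw [force_formula m hm _ _ hAl hAl]
    have hz : List.zipWith (· && ·) (C a) (C a) = C a := by
      rw [List.zipWith_self]
      simp
    rw [hz, hAc']
    push_cast
    ring
  · intro hne
    have hCne : C a ≠ C b := fun h => hne (hinj a ha b hb h)
    obtain ⟨h1, h2, h3⟩ := zip_count_lemma (C a) (C b) (by omega)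
    have hS : (List.zipWith (· && ·) (C a) (C b)).count true ≠ 2 * m := by
      intro hS
      exact hCne (h3 (by omega) (by omega))
    rw [force_formula m hm _ _ hAl hBl]
    omega
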